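/- Let G be a finite group acting unitarily on a finite-dimensional complex inner product space V, let A : V → V be self-adjoint and commute with the action of G, and let G₁, G₂ be subgroups of G such that every conjugacy class of G meets G₁ and G₂ in the same number of elements. Then Tr(A restricted to V^{G₁}) = Tr(A restricted to V^{G₂}). -/

import Mathlib

open Finset

/-- Sums of class functions over almost conjugate subgroups agree. -/
lemma aux_classfun_sum {G : Type*} [Group G] [Fintype G] (G₁ G₂ : Subgroup G)
    [DecidablePred (· ∈ G₁)] [DecidablePred (· ∈ G₂)]
    (halmost : ∀ g : G,
      Nat.card {x : G | IsConj g x ∧ x ∈ G₁} = Nat.card {x : G | IsConj g x ∧ x ∈ G₂})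
    {M : Type*} [AddCommMonoid M]
    (f : G → M) (hf : ∀ a b : G, IsConj a b → f a = f b) :
    ∑ g ∈ univ.filter (· ∈ G₁), f g = ∑ g ∈ univ.filter (· ∈ G₂), f g := by
  classical
  have : Fintype (ConjClasses G) := Fintype.ofFinite _
  set f' : ConjClasses G → M := Quotient.lift f hf with hf'
  have hlift : ∀ g : G, f g = f' (ConjClasses.mk g) := fun g => rfl
  have key : ∀ (H : Subgroup G) (_ : DecidablePred (· ∈ H)), ∑ g ∈ univ.filter (· ∈ H), f g
      = ∑ c : ConjClasses G,
          (univ.filter (fun x => x ∈ H ∧ ConjClasses.mk x = c)).card • f' c := by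
    intro H _
    calc ∑ g ∈ univ.filter (· ∈ H), f g
        = ∑ g ∈ univ.filter (· ∈ H), f' (ConjClasses.mk g) := by
          exact Finset.sum_congr rfl fun g _ => hlift g
      _ = ∑ c : ConjClasses G,
            ∑ g ∈ (univ.filter (· ∈ H)).filter (fun x => ConjClasses.mk x = c), f' c := by
          rw [Finset.sum_fiberwise' (univ.filter (· ∈ H)) ConjClasses.mk f']
      _ = _ := by
          refine Finset.sum_congr rfl fun c _ => ?_
          rw [Finset.sum_const, Finset.filter_filter]
  have hcount : ∀ c : ConjClasses G,
      (univ.filter (fun x => x ∈ G₁ ∧ ConjClasses.mk x = c)).card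
        = (univ.filter (fun x => x ∈ G₂ ∧ ConjClasses.mk x = c)).card := by
    intro c
    obtain ⟨g, rfl⟩ : ∃ g, ConjClasses.mk g = c := Quotient.exists_rep c
    have h1 : ∀ (H : Subgroup G) (_ : DecidablePred (· ∈ H)),
        (univ.filter (fun x => x ∈ H ∧ ConjClasses.mk x = ConjClasses.mk g)).card
        = Nat.card {x : G | IsConj g x ∧ x ∈ H} := by
      intro H _
      have hset : {x : G | IsConj g x ∧ x ∈ H}
          = ↑(univ.filter (fun x => x ∈ H ∧ ConjClasses.mk x = ConjClasses.mk g)) := by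
        ext x
        simp only [Set.mem_setOf_eq, Finset.coe_filter, Finset.mem_univ, true_and]
        constructor
        · rintro ⟨h1, h2⟩
          exact ⟨h2, ConjClasses.mk_eq_mk_iff_isConj.mpr h1.symm⟩
        · rintro ⟨h1, h2⟩
          exact ⟨(ConjClasses.mk_eq_mk_iff_isConj.mp h2).symm, h1⟩
      rw [hset, Nat.card_coe_set_eq, Set.ncard_coe_finset]
    rw [h1 G₁ inferInstance, h1 G₂ inferInstance, halmost g]
  rw [key G₁ inferInstance, key G₂ inferInstance]
  exact Finset.sum_congr rfl fun c _ => by rw [hcount c]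

/-- If G₁, G₂ are almost conjugate subgroups of a finite group G acting unitarily on V,
and A is self-adjoint and commutes with the action, then the traces of A restricted to
the G₁- and G₂-invariants are equal. -/
theorem stmt_5 (V : Type*) [NormedAddCommGroup V] [InnerProductSpace ℂ V]
    [FiniteDimensional ℂ V]
    (G : Type*) [Group G] [Fintype G]
    (ρ : G →* (V →ₗ[ℂ] V))
    (hunit : ∀ (g : G) (x y : V), (inner ℂ (ρ g x) (ρ g y) : ℂ) = inner ℂ x y)
    (A : V →ₗ[ℂ] V) (hA : A.IsSymmetric)
    (hcomm : ∀ g : G, A ∘ₗ ρ g = ρ g ∘ₗ A)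
    (G₁ G₂ : Subgroup G)
    (halmost : ∀ g : G,
      Nat.card {x : G | IsConj g x ∧ x ∈ G₁} = Nat.card {x : G | IsConj g x ∧ x ∈ G₂})
    (W₁ W₂ : Submodule ℂ V)
    (hW₁ : ∀ v : V, v ∈ W₁ ↔ ∀ g ∈ G₁, ρ g v = v)
    (hW₂ : ∀ v : V, v ∈ W₂ ↔ ∀ g ∈ G₂, ρ g v = v)
    (hres₁ : ∀ x ∈ W₁, A x ∈ W₁) (hres₂ : ∀ x ∈ W₂, A x ∈ W₂) :
    LinearMap.trace ℂ W₁ (A.restrict hres₁) = LinearMap.trace ℂ W₂ (A.restrict hres₂) := by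
  classical
  -- the class function g ↦ trace (A * ρ g)
  set f : G → ℂ := fun g => LinearMap.trace ℂ V (A * ρ g) with hf
  have hclass : ∀ a b : G, IsConj a b → f a = f b := by
    intro a b hab
    obtain ⟨c, hc⟩ := isConj_iff.mp hab
    have hAc : A * ρ c = ρ c * A := hcomm c
    have step : A * ρ b = (ρ c * (A * ρ a)) * ρ c⁻¹ := by
      rw [← hc, map_mul, map_mul, ← mul_assoc, ← mul_assoc, hAc, mul_assoc (ρ c) A (ρ a)]
    calc f a = LinearMap.trace ℂ V (A * ρ a) := rfl
      _ = LinearMap.trace ℂ V ((ρ c * (A * ρ a)) * ρ c⁻¹) := by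
          rw [LinearMap.trace_mul_comm ℂ (ρ c * (A * ρ a)) (ρ c⁻¹), ← mul_assoc, ← map_mul,
            inv_mul_cancel, map_one, one_mul]
      _ = LinearMap.trace ℂ V (A * ρ b) := by rw [step]
      _ = f b := rfl
  -- main lemma: |H| * trace(A restricted to W) = ∑_{g ∈ H} trace (A * ρ g)
  have main : ∀ (H : Subgroup G) (W : Submodule ℂ V)
      (hW : ∀ v : V, v ∈ W ↔ ∀ g ∈ H, ρ g v = v)
      (hres : ∀ x ∈ W, A x ∈ W),
      ((Finset.univ.filter (· ∈ H)).card : ℂ) * LinearMap.trace ℂ W (A.restrict hres)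
        = ∑ g ∈ Finset.univ.filter (· ∈ H), f g := by
    intro H W hW hres
    set S := Finset.univ.filter (· ∈ H) with hS
    set P : V →ₗ[ℂ] V := ∑ g ∈ S, ρ g with hP
    have hmemS : ∀ {g : G}, g ∈ S ↔ g ∈ H := by
      intro g; simp [hS]
    have hPapp : ∀ y : V, P y = ∑ g ∈ S, ρ g y := by
      intro y; rw [hP, LinearMap.sum_apply]
    -- P maps into W
    have hPW : ∀ x : V, P x ∈ W := by
      intro x
      rw [hW]
      intro h hh
      rw [hPapp, map_sum]
      have reindex : ∑ g ∈ S, ρ h (ρ g x) = ∑ g ∈ S, ρ g x := by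
        refine Finset.sum_nbij' (fun g => h * g) (fun g => h⁻¹ * g) ?_ ?_ ?_ ?_ ?_
        · intro g hg; rw [hmemS] at *; exact H.mul_mem hh hg
        · intro g hg; rw [hmemS] at *; exact H.mul_mem (H.inv_mem hh) hg
        · intro g _; group
        · intro g _; group
        · intro g _; rw [← Module.End.mul_apply, ← map_mul]
      rw [reindex, ← hPapp]
    -- A ∘ P maps into W
    have hAPW : ∀ x : V, (A * P) x ∈ W := fun x => hres _ (hPW x)
    have hAPW' : ∀ x ∈ W, (A * P) x ∈ W := fun x _ => hAPW x
    -- P acts as |S| • id on W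
    have hPfix : ∀ x ∈ W, P x = (S.card : ℂ) • x := by
      intro x hx
      rw [hPapp, Finset.sum_congr rfl (fun g hg => (hW x).mp hx g (hmemS.mp hg)),
        Finset.sum_const]
      exact (Nat.cast_smul_eq_nsmul (R := ℂ) S.card x).symm
    -- trace identity
    have h1 : LinearMap.trace ℂ W ((A * P).restrict hAPW')
        = LinearMap.trace ℂ V (A * P) :=
      LinearMap.trace_restrict_eq_of_forall_mem W (A * P) hAPW hAPW'
    have h2 : (A * P).restrict hAPW' = (S.card : ℂ) • (A.restrict hres) := by
      ext x
      have h : (A * P) (x : V) = (S.card : ℂ) • A (x : V) := by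
        rw [Module.End.mul_apply, hPfix (x : V) x.2, map_smul]
      simpa [LinearMap.restrict_apply] using h
    have h3 : LinearMap.trace ℂ V (A * P) = ∑ g ∈ S, f g := by
      rw [hP, Finset.mul_sum, map_sum]
    rw [← h3, ← h1, h2, map_smul, smul_eq_mul]
  have e1 := main G₁ W₁ hW₁ hres₁
  have e2 := main G₂ W₂ hW₂ hres₂
  have hsum := aux_classfun_sum G₁ G₂ halmost f hclass
  have hcardnat : (Finset.univ.filter (· ∈ G₁)).card = (Finset.univ.filter (· ∈ G₂)).card := by
    have := aux_classfun_sum G₁ G₂ halmost (fun _ => (1 : ℕ)) (fun _ _ _ => rfl)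
    simpa using this
  have hne : ((Finset.univ.filter (· ∈ G₁)).card : ℂ) ≠ 0 := by
    have h1 : (1 : G) ∈ Finset.univ.filter (· ∈ G₁) := by simp [G₁.one_mem]
    exact_mod_cast (Nat.cast_ne_zero (R := ℂ)).mpr (Finset.card_pos.mpr ⟨1, h1⟩).ne'
  have key : ((Finset.univ.filter (· ∈ G₁)).card : ℂ) * LinearMap.trace ℂ W₁ (A.restrict hres₁)
      = ((Finset.univ.filter (· ∈ G₁)).card : ℂ) * LinearMap.trace ℂ W₂ (A.restrict hres₂) := by
    rw [e1, hsum, ← e2, hcardnat]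
  exact mul_left_cancel₀ hne key
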